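/- If ε₂ = 0 and c ≠ 0 and b ≠ 0, the cubic P(v) = cv³ + av² + b²/4 has three distinct real roots if and only if a < −3·(|bc|/4)^{2/3}. -/

import Mathlib

open Polynomial Set

private theorem stmt10_rootset_eq (a c e : ℝ) (hc : c ≠ 0) :
    ∃ s : Finset ℝ, ({v : ℝ | c*v^3 + a*v^2 + e = 0} : Set ℝ) = ↑s ∧ s.card ≤ 3 := by
  set p : ℝ[X] := C c * X^3 + C a * X^2 + C e with hp
  have hp0 : p ≠ 0 := by
    intro h
    have : p.coeff 3 = c := by simp [hp, coeff_add, coeff_C_mul, coeff_X_pow, coeff_C]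
    rw [h] at this
    simp at this
    exact hc this.symm
  have hdeg : p.natDegree ≤ 3 := by
    rw [hp]; compute_degree
  refine ⟨p.roots.toFinset, ?_, ?_⟩
  · ext v
    simp only [Set.mem_setOf_eq, Multiset.mem_toFinset, Finset.mem_coe,
      mem_roots hp0, IsRoot.def]
    constructor <;> intro h <;> simp [hp, eval_add, eval_mul] at * <;> linarith
  · exact le_trans (Multiset.toFinset_card_le _) (le_trans (p.card_roots') hdeg)

private theorem stmt10_ivt_up {f : ℝ → ℝ} (hf : Continuous f) {x y : ℝ} (hxy : x < y)
    (h1 : f x < 0) (h2 : 0 < f y) : ∃ z, x < z ∧ z < y ∧ f z = 0 := by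
  obtain ⟨z, hz, hz0⟩ := intermediate_value_Ioo hxy.le hf.continuousOn (f := f) ⟨h1, h2⟩
  exact ⟨z, hz.1, hz.2, hz0⟩

private theorem stmt10_ivt_down {f : ℝ → ℝ} (hf : Continuous f) {x y : ℝ} (hxy : x < y)
    (h1 : 0 < f x) (h2 : f y < 0) : ∃ z, x < z ∧ z < y ∧ f z = 0 := by
  obtain ⟨z, hz, hz0⟩ := intermediate_value_Ioo' hxy.le hf.continuousOn (f := f) ⟨h2, h1⟩
  exact ⟨z, hz.1, hz.2, hz0⟩

private theorem stmt10_deriv_cubic (a c e : ℝ) (v : ℝ) :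
    HasDerivAt (fun v : ℝ => c*v^3 + a*v^2 + e) (3*c*v^2 + 2*a*v) v := by
  have h := (((hasDerivAt_pow 3 v).const_mul c).add ((hasDerivAt_pow 2 v).const_mul a)).add_const e
  refine h.congr_deriv ?_
  push_cast
  ring

private theorem stmt10_forward_pos (a c e : ℝ) (hc : 0 < c) (he : 0 < e)
    (H : 4*a^3/(27*c^2) + e < 0) :
    Set.ncard {v : ℝ | c*v^3 + a*v^2 + e = 0} = 3 := by
  set f : ℝ → ℝ := fun v => c*v^3 + a*v^2 + e with hf
  have hcont : Continuous f := by continuity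
  have hc2 : (0:ℝ) < c^2 := by positivity
  have ha3 : a^3 < 0 := by
    have : 4*a^3/(27*c^2) < -e := by linarith
    rw [div_lt_iff₀ (by positivity)] at this
    nlinarith
  have ha : a < 0 := by nlinarith [sq_nonneg a]
  set m : ℝ := -2*a/(3*c) with hm
  have hm0 : 0 < m := by rw [hm]; apply div_pos <;> linarith
  have hfm : f m < 0 := by
    have : f m = 4*a^3/(27*c^2) + e := by
      rw [hf, hm]; field_simp; ring
    linarith [this ▸ H, this]
  have hf0 : (0:ℝ) < f 0 := by simp [hf]; linarith
  set q : ℝ := (|a| + 2*e)/c with hq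
  have hq0 : 0 ≤ q := by positivity
  set xn : ℝ := -q - 1 with hxn
  set xp : ℝ := q + 1 + m with hxp
  have hxn1 : xn ≤ -1 := by linarith
  have hxnsq : 1 ≤ xn^2 := by nlinarith [sq_nonneg (xn+1)]
  have hcxn : c*xn + a ≤ -2*e := by
    have : c * q = |a| + 2*e := by rw [hq]; field_simp
    nlinarith [le_abs_self a, abs_nonneg a]
  have hfxn : f xn < 0 := by
    have key : xn^2*(c*xn+a) ≤ c*xn+a := by
      nlinarith [mul_nonneg (by linarith : (0:ℝ) ≤ xn^2 - 1) (by linarith : (0:ℝ) ≤ -(c*xn+a))]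
    have : f xn = xn^2*(c*xn+a) + e := by rw [hf]; ring
    linarith
  have hxp1 : 1 ≤ xp := by linarith
  have hxpsq : 1 ≤ xp^2 := by nlinarith
  have hcxp : 2*e ≤ c*xp + a := by
    have : c * q = |a| + 2*e := by rw [hq]; field_simp
    nlinarith [neg_abs_le a]
  have hfxp : 0 < f xp := by
    have key : c*xp+a ≤ xp^2*(c*xp+a) := by
      nlinarith [mul_nonneg (by linarith : (0:ℝ) ≤ xp^2 - 1) (by linarith : (0:ℝ) ≤ c*xp+a)]
    have : f xp = xp^2*(c*xp+a) + e := by rw [hf]; ring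
    linarith
  have hxnm : xn < 0 := by linarith
  have hmxp : m < xp := by linarith
  obtain ⟨r1, hr1a, hr1b, hr1⟩ := stmt10_ivt_up hcont hxnm hfxn hf0
  obtain ⟨r2, hr2a, hr2b, hr2⟩ := stmt10_ivt_down hcont hm0 hf0 hfm
  obtain ⟨r3, hr3a, hr3b, hr3⟩ := stmt10_ivt_up hcont hmxp hfm hfxp
  obtain ⟨s, hs, hcard⟩ := stmt10_rootset_eq a c e (ne_of_gt hc)
  have hSn : ({v : ℝ | c*v^3 + a*v^2 + e = 0}).ncard = s.card := by
    rw [hs, Set.ncard_coe_finset]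
  have hsub : ({r1, r2, r3} : Set ℝ) ⊆ {v : ℝ | c*v^3 + a*v^2 + e = 0} := by
    rintro v (rfl | rfl | rfl)
    · exact hr1
    · exact hr2
    · exact hr3
  have h3 : ({r1, r2, r3} : Set ℝ).ncard = 3 :=
    Set.ncard_eq_three.mpr ⟨r1, r2, r3, by intro h; subst h; linarith,
      by intro h; subst h; linarith, by intro h; subst h; linarith, rfl⟩
  have hfin : ({v : ℝ | c*v^3 + a*v^2 + e = 0}).Finite := by
    rw [hs]; exact s.finite_toSet
  have hle := Set.ncard_le_ncard hsub hfin
  omega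

private theorem stmt10_forward (a c e : ℝ) (hc : c ≠ 0) (he : 0 < e)
    (H : 4*a^3/(27*c^2) + e < 0) :
    Set.ncard {v : ℝ | c*v^3 + a*v^2 + e = 0} = 3 := by
  rcases hc.lt_or_gt with hneg | hpos
  · have hpos' : 0 < -c := by linarith
    have H' : 4*a^3/(27*(-c)^2) + e < 0 := by
      have : (-c)^2 = c^2 := by ring
      rw [this]; exact H
    have key := stmt10_forward_pos a (-c) e hpos' he H'
    have himg : {v : ℝ | c*v^3 + a*v^2 + e = 0} =
        (fun v : ℝ => -v) '' {v : ℝ | (-c)*v^3 + a*v^2 + e = 0} := by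
      ext v
      simp only [Set.mem_setOf_eq, Set.mem_image]
      constructor
      · intro h
        exact ⟨-v, by ring_nf; ring_nf at h; linarith, by ring⟩
      · rintro ⟨w, hw, rfl⟩
        ring_nf; ring_nf at hw; linarith
    rw [himg, Set.ncard_image_of_injective _ neg_injective, key]
  · exact stmt10_forward_pos a c e hpos he H

private theorem stmt10_order3 (x y z : ℝ) (hxy : x ≠ y) (hxz : x ≠ z) (hyz : y ≠ z) :
    ∃ p q r : ℝ, p < q ∧ q < r ∧ ({x, y, z} : Set ℝ) = {p, q, r} := by
  have e1 : ({x, y, z} : Set ℝ) = {x, z, y} := by ext w; simp; tauto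
  have e2 : ({x, y, z} : Set ℝ) = {y, x, z} := by ext w; simp; tauto
  have e3 : ({x, y, z} : Set ℝ) = {y, z, x} := by ext w; simp; tauto
  have e4 : ({x, y, z} : Set ℝ) = {z, x, y} := by ext w; simp; tauto
  have e5 : ({x, y, z} : Set ℝ) = {z, y, x} := by ext w; simp; tauto
  rcases hxy.lt_or_gt with h1 | h1 <;> rcases hxz.lt_or_gt with h2 | h2 <;>
    rcases hyz.lt_or_gt with h3 | h3
  · exact ⟨x, y, z, h1, h3, rfl⟩
  · exact ⟨x, z, y, h2, h3, e1⟩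
  · exact ⟨z, x, y, h2, h1, e4⟩
  · exact ⟨z, x, y, h2, h1, e4⟩
  · exact ⟨y, x, z, h1, h2, e2⟩
  · exact ⟨y, x, z, h1, h2, e2⟩
  · exact ⟨y, z, x, h3, h2, e3⟩
  · exact ⟨z, y, x, h3, h1, e5⟩

private theorem stmt10_backward (a c e : ℝ) (hc : c ≠ 0) (he : 0 < e)
    (H : Set.ncard {v : ℝ | c*v^3 + a*v^2 + e = 0} = 3) :
    4*a^3/(27*c^2) + e < 0 := by
  set f : ℝ → ℝ := fun v => c*v^3 + a*v^2 + e with hf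
  have hcont : Continuous f := by continuity
  set S : Set ℝ := {v : ℝ | c*v^3 + a*v^2 + e = 0} with hSdef
  have hmemS : ∀ v, v ∈ S ↔ f v = 0 := fun v => Iff.rfl
  obtain ⟨x, y, z, hxy, hxz, hyz, hS⟩ := Set.ncard_eq_three.mp H
  obtain ⟨r1, r2, r3, h12, h23, hset⟩ := stmt10_order3 x y z hxy hxz hyz
  rw [hset] at hS
  have hr1 : f r1 = 0 := (hmemS r1).mp (by rw [hS]; left; rfl)
  have hr2 : f r2 = 0 := (hmemS r2).mp (by rw [hS]; right; left; rfl)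
  have hr3 : f r3 = 0 := (hmemS r3).mp (by rw [hS]; right; right; rfl)
  have hmemS' : ∀ v, f v = 0 → v = r1 ∨ v = r2 ∨ v = r3 := by
    intro v hv
    have : v ∈ S := (hmemS v).mpr hv
    rw [hS] at this
    simpa using this
  have hderiv : ∀ v, deriv f v = 3*c*v^2 + 2*a*v := fun v => (stmt10_deriv_cubic a c e v).deriv
  set m : ℝ := -2*a/(3*c) with hm
  have hcrit : ∀ s : ℝ, 3*c*s^2 + 2*a*s = 0 → s = 0 ∨ s = m := by
    intro s hs
    have : s * (3*c*s + 2*a) = 0 := by linarith [hs]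
    rcases mul_eq_zero.mp this with h | h
    · exact Or.inl h
    · right; rw [hm]; field_simp; linarith
  obtain ⟨s1, hs1mem, hs1⟩ := exists_deriv_eq_zero h12 hcont.continuousOn (hr1.trans hr2.symm)
  obtain ⟨s2, hs2mem, hs2⟩ := exists_deriv_eq_zero h23 hcont.continuousOn (hr2.trans hr3.symm)
  rw [hderiv] at hs1 hs2
  have hs1c := hcrit s1 hs1
  have hs2c := hcrit s2 hs2
  have hs1s2 : s1 < s2 := lt_trans hs1mem.2 hs2mem.1
  have hf0 : f 0 = e := by simp [hf]
  have hfs1 : f s1 ≠ 0 := by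
    intro h
    rcases hmemS' s1 h with rfl | rfl | rfl
    · exact absurd hs1mem.1 (lt_irrefl _)
    · exact absurd hs1mem.2 (lt_irrefl _)
    · linarith [hs1mem.2, h23]
  have hfs2 : f s2 ≠ 0 := by
    intro h
    rcases hmemS' s2 h with rfl | rfl | rfl
    · linarith [hs2mem.1, h12]
    · exact absurd hs2mem.1 (lt_irrefl _)
    · exact absurd hs2mem.2 (lt_irrefl _)
  have hms : m = s1 ∨ m = s2 := by
    rcases hs1c with h | h
    · rcases hs2c with h' | h'
      · exfalso; rw [h, h'] at hs1s2; exact lt_irrefl _ hs1s2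
      · exact Or.inr h'.symm
    · exact Or.inl h.symm
  have hfm_ne : f m ≠ 0 := by rcases hms with rfl | rfl <;> assumption
  have hfm : f m < 0 := by
    rcases lt_or_gt_of_ne hfm_ne with h | h
    · exact h
    exfalso
    have hfs1p : 0 < f s1 := by
      rcases hs1c with h1 | h1 <;> rw [h1]
      · rw [hf0]; exact he
      · exact h
    have hfs2p : 0 < f s2 := by
      rcases hs2c with h1 | h1 <;> rw [h1]
      · rw [hf0]; exact he
      · exact h
    have pos1 : ∀ w, r1 < w → w < r2 → 0 < f w := by
      intro w hw1 hw2
      by_contra hcon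
      push_neg at hcon
      have hwne : f w ≠ 0 := by
        intro h0
        rcases hmemS' w h0 with rfl | rfl | rfl <;> linarith
      have hwneg : f w < 0 := lt_of_le_of_ne hcon hwne
      rcases lt_trichotomy w s1 with hws | hws | hws
      · obtain ⟨u, hu1, hu2, hu⟩ := stmt10_ivt_up hcont hws hwneg hfs1p
        rcases hmemS' u hu with rfl | rfl | rfl <;> linarith [hs1mem.1, hs1mem.2]
      · rw [hws] at hwneg; linarith
      · obtain ⟨u, hu1, hu2, hu⟩ := stmt10_ivt_down hcont hws hfs1p hwneg
        rcases hmemS' u hu with rfl | rfl | rfl <;> linarith [hs1mem.1, hs1mem.2]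
    have pos2 : ∀ w, r2 < w → w < r3 → 0 < f w := by
      intro w hw1 hw2
      by_contra hcon
      push_neg at hcon
      have hwne : f w ≠ 0 := by
        intro h0
        rcases hmemS' w h0 with rfl | rfl | rfl <;> linarith
      have hwneg : f w < 0 := lt_of_le_of_ne hcon hwne
      rcases lt_trichotomy w s2 with hws | hws | hws
      · obtain ⟨u, hu1, hu2, hu⟩ := stmt10_ivt_up hcont hws hwneg hfs2p
        rcases hmemS' u hu with rfl | rfl | rfl <;> linarith [hs2mem.1, hs2mem.2]
      · rw [hws] at hwneg; linarith
      · obtain ⟨u, hu1, hu2, hu⟩ := stmt10_ivt_down hcont hws hfs2p hwneg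
        rcases hmemS' u hu with rfl | rfl | rfl <;> linarith [hs2mem.1, hs2mem.2]
    have hlocmin : IsLocalMin f r2 := by
      apply Filter.eventually_of_mem (Ioo_mem_nhds h12 h23)
      intro w hw
      rw [hr2]
      rcases lt_trichotomy w r2 with hwr | hwr | hwr
      · exact le_of_lt (pos1 w hw.1 hwr)
      · rw [hwr, hr2]
      · exact le_of_lt (pos2 w hwr hw.2)
    have := hlocmin.deriv_eq_zero
    rw [hderiv] at this
    rcases hcrit r2 this with h0 | h0
    · rw [h0, hf0] at hr2; linarith
    · exact hfm_ne (h0 ▸ hr2)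
  have : f m = 4*a^3/(27*c^2) + e := by
    rw [hf, hm]; field_simp; ring
  linarith [this ▸ hfm]

private theorem stmt10_alg (a b c : ℝ) (hb : b ≠ 0) (hc : c ≠ 0) :
    (4*a^3/(27*c^2) + b^2/4 < 0) ↔ a < -3 * (|b * c| / 4) ^ ((2 : ℝ) / 3) := by
  have hx : (0:ℝ) < |b*c|/4 := by positivity
  set t : ℝ := (|b * c| / 4) ^ ((2 : ℝ) / 3) with ht
  have ht3 : t ^ (3:ℕ) = (|b*c|/4) ^ (2:ℕ) := by
    rw [ht, ← Real.rpow_natCast ((|b * c| / 4) ^ ((2 : ℝ) / 3)) 3, ← Real.rpow_mul hx.le]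
    norm_num
  have habs : (|b*c|/4)^(2:ℕ) = b^2*c^2/16 := by
    rw [div_pow, sq_abs, mul_pow]; norm_num
  have hcube := (Odd.strictMono_pow (R := ℝ) (by decide : Odd 3)).lt_iff_lt (a := a) (b := -3*t)
  rw [← hcube]
  have hp : (0:ℝ) < 27*c^2/4 := by positivity
  rw [show 4*a^3/(27*c^2) + b^2/4 = (a^3 - (-27*(b^2*c^2/16))) / (27*c^2/4) by field_simp; ring,
    div_lt_iff₀ hp, zero_mul, sub_neg,
    show ((-3)*t)^(3:ℕ) = -27 * t^(3:ℕ) by ring, ht3, habs]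

/-- For ε₂ = 0, c ≠ 0, b ≠ 0: the cubic P(v) = cv³ + av² + b²/4 has
three distinct real roots iff a < −3·(|bc|/4)^(2/3). -/
theorem stmt_10 (a b c : ℝ) (hb : b ≠ 0) (hc : c ≠ 0) :
    Set.ncard {v : ℝ | c * v ^ 3 + a * v ^ 2 + b ^ 2 / 4 = 0} = 3 ↔
      a < -3 * (|b * c| / 4) ^ ((2 : ℝ) / 3) := by
  have he : (0:ℝ) < b^2/4 := by positivity
  rw [← stmt10_alg a b c hb hc]
  constructor
  · exact stmt10_backward a c (b^2/4) hc he
  · exact stmt10_forward a c (b^2/4) hc he
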